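/- Energy gap upper bound by the inertial cost: for every t ∈ [0,T], u₁, u₂ ∈ X and every regularized contact potential p, E(t,u₁) − E(t,u₂) ≤ c_t^{M,p}(u₁,u₂). Consequently E(t,u₁) − E(t,u₂) ≤ inf_{p ∈ RCP_V} c_t^{M,p}(u₁,u₂). -/

import Mathlib

open MeasureTheory

/-- An admissible curve in `V^{M,N}_{u₁,u₂}`: a `W^{2,∞}` curve on `[−N,N]`
(encoded through its derivative `dv` and second derivative `ddv` via integral
representations) joining `u₁` to `u₂`, with `M v̇(±N) = 0` and
`‖M v̈‖_* ≤ C̄` almost everywhere. -/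
structure AdmCurve {X : Type*} [NormedAddCommGroup X] [NormedSpace ℝ X]
    (M : X →L[ℝ] X →L[ℝ] ℝ) (Cbar : ℝ) (N : ℕ) (u₁ u₂ : X) where
  v : ℝ → X
  dv : ℝ → X
  ddv : ℝ → X
  h_start : v (-(N : ℝ)) = u₁
  h_end : v (N : ℝ) = u₂
  h_vel_start : M (dv (-(N : ℝ))) = 0
  h_vel_end : M (dv (N : ℝ)) = 0
  h_meas : AEStronglyMeasurable ddv volume
  h_int1 : ∀ r ∈ Set.Icc (-(N : ℝ)) (N : ℝ), v r = u₁ + ∫ s in (-(N : ℝ))..r, dv s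
  h_int2 : ∀ r ∈ Set.Icc (-(N : ℝ)) (N : ℝ), dv r = dv (-(N : ℝ)) + ∫ s in (-(N : ℝ))..r, ddv s
  h_bound : ∀ᵐ r ∂volume, r ∈ Set.Icc (-(N : ℝ)) (N : ℝ) → ‖M (ddv r)‖ ≤ Cbar

/-- The inertial energy-dissipation cost
`c_t^{M,p}(u₁,u₂) = inf { ∫_{−N}^{N} p(v̇, −M v̈ − D_x E(t,v)) dr }`
over `N ∈ ℕ` and admissible curves. -/
noncomputable def inertialCost {X : Type*} [NormedAddCommGroup X] [NormedSpace ℝ X]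
    (M : X →L[ℝ] X →L[ℝ] ℝ) (Cbar : ℝ) (p : X → (X →L[ℝ] ℝ) → ℝ)
    (DE : ℝ → X → (X →L[ℝ] ℝ)) (t : ℝ) (u₁ u₂ : X) : ℝ :=
  sInf {s : ℝ | ∃ N : ℕ, ∃ A : AdmCurve M Cbar N u₁ u₂,
    s = ∫ r in (-(N : ℝ))..(N : ℝ), p (A.dv r) (-(M (A.ddv r)) - DE t (A.v r))}

lemma sym_fubini {X : Type*} [NormedAddCommGroup X] [NormedSpace ℝ X] [CompleteSpace X]
    (B : X →L[ℝ] X →L[ℝ] ℝ) (hB : ∀ x y, B x y = B y x)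
    {a b : ℝ} (g : ℝ → X)
    (hgm : AEStronglyMeasurable g (volume.restrict (Set.Ioc a b)))
    {C : ℝ} (hgb : ∀ᵐ r ∂(volume.restrict (Set.Ioc a b)), ‖g r‖ ≤ C) :
    (2:ℝ) * ∫ r in Set.Ioc a b, B (g r) (∫ s in Set.Ioc a r, g s) =
      B (∫ r in Set.Ioc a b, g r) (∫ r in Set.Ioc a b, g r) := by
  set μ := volume.restrict (Set.Ioc a b) with hμ
  haveI hfin : IsFiniteMeasure μ := by
    constructor
    rw [hμ, Measure.restrict_apply_univ]
    exact measure_Ioc_lt_top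
  -- integrability of g
  have hg : Integrable g μ :=
    Integrable.mono' (integrable_const C) hgm hgb
  have hBc : Continuous (fun q : X × X => B q.1 q.2) := B.continuous₂
  -- measurability on product
  have hm1 : AEStronglyMeasurable (fun q : ℝ × ℝ => g q.1) (μ.prod μ) :=
    hgm.comp_quasiMeasurePreserving Measure.quasiMeasurePreserving_fst
  have hm2 : AEStronglyMeasurable (fun q : ℝ × ℝ => g q.2) (μ.prod μ) :=
    hgm.comp_quasiMeasurePreserving Measure.quasiMeasurePreserving_snd
  set F : ℝ × ℝ → ℝ := fun q => B (g q.1) (g q.2) with hF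
  have hFm : AEStronglyMeasurable F (μ.prod μ) :=
    hBc.comp_aestronglyMeasurable (hm1.prodMk hm2)
  have hb1 : ∀ᵐ q ∂(μ.prod μ), ‖g q.1‖ ≤ C :=
    Measure.quasiMeasurePreserving_fst.ae hgb
  have hb2 : ∀ᵐ q ∂(μ.prod μ), ‖g q.2‖ ≤ C :=
    Measure.quasiMeasurePreserving_snd.ae hgb
  have hFb : ∀ᵐ q ∂(μ.prod μ), ‖F q‖ ≤ ‖B‖ * C * C := by
    filter_upwards [hb1, hb2] with q h1 h2
    have hC : 0 ≤ C := le_trans (norm_nonneg _) h1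
    calc ‖F q‖ ≤ ‖B (g q.1)‖ * ‖g q.2‖ := (B (g q.1)).le_opNorm _
      _ ≤ (‖B‖ * ‖g q.1‖) * ‖g q.2‖ :=
        mul_le_mul_of_nonneg_right (B.le_opNorm _) (norm_nonneg _)
      _ ≤ (‖B‖ * C) * C := by
        apply mul_le_mul _ h2 (norm_nonneg _) (by positivity)
        exact mul_le_mul_of_nonneg_left h1 (norm_nonneg B)
  have hFint : Integrable F (μ.prod μ) :=
    Integrable.mono' (integrable_const _) hFm hFb
  set H₁ : ℝ × ℝ → ℝ := fun q => if q.2 ≤ q.1 then F q else 0 with hH₁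
  set H₂ : ℝ × ℝ → ℝ := fun q => if q.1 ≤ q.2 then F q else 0 with hH₂
  have hs₁ : MeasurableSet {q : ℝ × ℝ | q.2 ≤ q.1} :=
    measurableSet_le measurable_snd measurable_fst
  have hs₂ : MeasurableSet {q : ℝ × ℝ | q.1 ≤ q.2} :=
    measurableSet_le measurable_fst measurable_snd
  have hH₁i : H₁ = Set.indicator {q : ℝ × ℝ | q.2 ≤ q.1} F := by
    ext q; simp [hH₁, Set.indicator_apply]
  have hH₂i : H₂ = Set.indicator {q : ℝ × ℝ | q.1 ≤ q.2} F := by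
    ext q; simp [hH₂, Set.indicator_apply]
  have hH₁int : Integrable H₁ (μ.prod μ) := by rw [hH₁i]; exact hFint.indicator hs₁
  have hH₂int : Integrable H₂ (μ.prod μ) := by rw [hH₂i]; exact hFint.indicator hs₂
  -- the diagonal is null
  have hdiagm : MeasurableSet {q : ℝ × ℝ | q.1 = q.2} :=
    measurableSet_eq_fun measurable_fst measurable_snd
  have hdiag : (μ.prod μ) {q : ℝ × ℝ | q.1 = q.2} = 0 := by
    rw [Measure.prod_apply hdiagm]
    have : ∀ r : ℝ, (Prod.mk r ⁻¹' {q : ℝ × ℝ | q.1 = q.2}) = {r} := by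
      intro r; ext s; simp [eq_comm]
    simp only [this]
    simp [measure_singleton]
  have hae : ∀ᵐ q ∂(μ.prod μ), q.1 ≠ q.2 := by
    rw [ae_iff]
    convert hdiag using 2
    ext q; simp
  have key1 : (∫ q, H₁ q ∂(μ.prod μ)) + (∫ q, H₂ q ∂(μ.prod μ)) = ∫ q, F q ∂(μ.prod μ) := by
    rw [← integral_add hH₁int hH₂int]
    apply integral_congr_ae
    filter_upwards [hae] with q hq
    rcases le_or_gt q.2 q.1 with h | h
    · have h2 : ¬ q.1 ≤ q.2 := by
        intro h'; exact hq (le_antisymm h' h)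
      simp [hH₁, hH₂, h, h2]
    · simp [hH₁, hH₂, h.le, not_le.mpr h]
  have key2 : (∫ q, H₂ q ∂(μ.prod μ)) = ∫ q, H₁ q ∂(μ.prod μ) := by
    have : ∀ q : ℝ × ℝ, H₂ q.swap = H₁ q := by
      intro q
      simp only [hH₂, hH₁, Prod.swap, hF]
      rcases le_or_gt q.2 q.1 with h | h
      · simp [h, hB (g q.2) (g q.1)]
      · simp [not_le.mpr h, h.le]
    calc (∫ q, H₂ q ∂(μ.prod μ)) = ∫ q, H₂ q.swap ∂(μ.prod μ) := (integral_prod_swap H₂).symm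
      _ = ∫ q, H₁ q ∂(μ.prod μ) := by simp only [this]
  have key3 : (∫ q, H₁ q ∂(μ.prod μ)) = ∫ r in Set.Ioc a b, B (g r) (∫ s in Set.Ioc a r, g s) := by
    rw [integral_prod _ hH₁int]
    apply setIntegral_congr_fun measurableSet_Ioc
    intro r hr
    have hind : ∀ s : ℝ, H₁ (r, s) = Set.indicator (Set.Iic r) (fun s => B (g r) (g s)) s := by
      intro s; simp [hH₁, hF, Set.indicator_apply, Set.mem_Iic]
    simp only [hind]
    rw [setIntegral_indicator measurableSet_Iic]
    have : Set.Ioc a b ∩ Set.Iic r = Set.Ioc a r := by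
      ext s; simp only [Set.mem_inter_iff, Set.mem_Ioc, Set.mem_Iic]
      constructor
      · rintro ⟨⟨h1, _⟩, h3⟩; exact ⟨h1, h3⟩
      · rintro ⟨h1, h2⟩; exact ⟨⟨h1, le_trans h2 hr.2⟩, h2⟩
    rw [this]
    exact (B (g r)).integral_comp_comm (hg.mono_measure
      (Measure.restrict_mono (Set.Ioc_subset_Ioc le_rfl hr.2) le_rfl))
  have key4 : (∫ q, F q ∂(μ.prod μ)) =
      B (∫ r in Set.Ioc a b, g r) (∫ r in Set.Ioc a b, g r) := by
    rw [integral_prod _ hFint]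
    have inner : ∀ r : ℝ, (∫ s, F (r, s) ∂μ) = B (g r) (∫ s, g s ∂μ) := by
      intro r
      exact ((B (g r)).integral_comp_comm hg)
    simp only [inner]
    have : ∀ r : ℝ, B (g r) (∫ s, g s ∂μ) = (B.flip (∫ s, g s ∂μ)) (g r) := by
      intro r; rfl
    simp only [this]
    rw [(B.flip (∫ s, g s ∂μ)).integral_comp_comm hg]
    rfl
  rw [← key3, ← key4, ← key1, key2]
  ring

lemma exists_admCurve {X : Type*} [NormedAddCommGroup X] [NormedSpace ℝ X] [CompleteSpace X]
    (M : X →L[ℝ] X →L[ℝ] ℝ) (Cbar : ℝ) (hCbar : 0 < Cbar) (u₁ u₂ : X) :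
    ∃ N : ℕ, Nonempty (AdmCurve M Cbar N u₁ u₂) := by
  set d := u₂ - u₁ with hd
  obtain ⟨N, hN⟩ := exists_nat_ge (max 1 (3 * ‖M‖ * ‖d‖ / (2 * Cbar)))
  have hN1 : (1:ℝ) ≤ N := le_trans (le_max_left _ _) hN
  have hN2 : 3 * ‖M‖ * ‖d‖ / (2 * Cbar) ≤ N := le_trans (le_max_right _ _) hN
  have hNpos : (0:ℝ) < N := lt_of_lt_of_le zero_lt_one hN1
  have hNne : (N:ℝ) ≠ 0 := ne_of_gt hNpos
  set Nr := (N:ℝ) with hNr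
  refine ⟨N, ⟨⟨fun r => u₁ + ((2 + 3*(r/Nr) - (r/Nr)^3)/4) • d,
    fun r => ((3 - 3*(r/Nr)^2)/(4*Nr)) • d,
    fun r => (-(6*(r/Nr))/(4*Nr^2)) • d, ?_, ?_, ?_, ?_, ?_, ?_, ?_, ?_⟩⟩⟩
  · have h : (-Nr)/Nr = -1 := by field_simp
    show u₁ + ((2 + 3*((-Nr)/Nr) - ((-Nr)/Nr)^3)/4) • d = u₁
    rw [h]; norm_num
  · have h : Nr/Nr = 1 := by field_simp
    show u₁ + ((2 + 3*(Nr/Nr) - (Nr/Nr)^3)/4) • d = u₂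
    rw [h]; norm_num; rw [hd]; abel
  · have h : (-Nr)/Nr = -1 := by field_simp
    show M (((3 - 3*((-Nr)/Nr)^2)/(4*Nr)) • d) = 0
    rw [h]; norm_num
  · have h : Nr/Nr = 1 := by field_simp
    show M (((3 - 3*(Nr/Nr)^2)/(4*Nr)) • d) = 0
    rw [h]; norm_num
  · apply Continuous.aestronglyMeasurable
    fun_prop
  · -- h_int1
    intro r _
    have hder : ∀ x : ℝ, HasDerivAt (fun y => ((2 + 3*(y/Nr) - (y/Nr)^3)/4) • d)
        (((3 - 3*(x/Nr)^2)/(4*Nr)) • d) x := by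
      intro x
      have h1 : HasDerivAt (fun y : ℝ => y/Nr) (1/Nr) x := (hasDerivAt_id x).div_const Nr
      have h2 : HasDerivAt (fun y : ℝ => (2 + 3*(y/Nr) - (y/Nr)^3)/4)
          ((3 * (1/Nr) - 3*(x/Nr)^2 * (1/Nr))/4) x := by
        exact (((h1.const_mul 3).const_add 2).sub (h1.pow 3)).div_const 4
      have h3 := h2.smul_const d
      convert h3 using 2
      field_simp
    have : (∫ s in (-Nr)..r, ((3 - 3*(s/Nr)^2)/(4*Nr)) • d)
        = ((2 + 3*(r/Nr) - (r/Nr)^3)/4) • d - ((2 + 3*((-Nr)/Nr) - ((-Nr)/Nr)^3)/4) • d := by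
      apply intervalIntegral.integral_eq_sub_of_hasDerivAt
      · intro x _; exact hder x
      · apply Continuous.intervalIntegrable; fun_prop
    rw [this]
    have hm : (-Nr)/Nr = -1 := by field_simp
    rw [hm]; norm_num
  · -- h_int2
    intro r _
    have hder : ∀ x : ℝ, HasDerivAt (fun y => ((3 - 3*(y/Nr)^2)/(4*Nr)) • d)
        ((-(6*(x/Nr))/(4*Nr^2)) • d) x := by
      intro x
      have h1 : HasDerivAt (fun y : ℝ => y/Nr) (1/Nr) x := (hasDerivAt_id x).div_const Nr
      have h2 : HasDerivAt (fun y : ℝ => (3 - 3*(y/Nr)^2)/(4*Nr))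
          ((0 - 3*(2*(x/Nr)^1 * (1/Nr)))/(4*Nr)) x := by
        exact ((hasDerivAt_const x (3:ℝ)).sub ((h1.pow 2).const_mul 3)).div_const (4*Nr)
      have h3 := h2.smul_const d
      convert h3 using 2
      field_simp
      ring
    have : (∫ s in (-Nr)..r, (-(6*(s/Nr))/(4*Nr^2)) • d)
        = ((3 - 3*(r/Nr)^2)/(4*Nr)) • d - ((3 - 3*((-Nr)/Nr)^2)/(4*Nr)) • d := by
      apply intervalIntegral.integral_eq_sub_of_hasDerivAt
      · intro x _; exact hder x
      · apply Continuous.intervalIntegrable; fun_prop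
    rw [this]
    abel
  · -- h_bound
    apply ae_of_all
    intro r hr
    show ‖M ((-(6*(r/Nr))/(4*Nr^2)) • d)‖ ≤ Cbar
    have habs : |r/Nr| ≤ 1 := by
      rw [abs_div, abs_of_pos hNpos, div_le_one hNpos]
      rw [Set.mem_Icc] at hr
      rw [abs_le]; exact ⟨hr.1, hr.2⟩
    have h2 : ‖M ((-(6*(r/Nr))/(4*Nr^2)) • d)‖ ≤ ‖M‖ * ‖(-(6*(r/Nr))/(4*Nr^2)) • d‖ :=
      M.le_opNorm _
    rw [norm_smul] at h2
    have h3 : ‖(-(6*(r/Nr))/(4*Nr^2))‖ ≤ 3/(2*Nr^2) := by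
      rw [Real.norm_eq_abs, abs_div, abs_of_pos (by positivity : (0:ℝ) < 4*Nr^2)]
      rw [div_le_div_iff₀ (by positivity) (by positivity)]
      have h4 : |(-(6*(r/Nr)))| = 6 * |r/Nr| := by
        rw [abs_neg, abs_mul]; norm_num
      rw [h4]
      nlinarith [sq_nonneg Nr, habs]
    refine le_trans h2 ?_
    have hdn : (0:ℝ) ≤ ‖d‖ := norm_nonneg d
    have hMn : (0:ℝ) ≤ ‖M‖ := norm_nonneg M
    have step : ‖M‖ * (‖(-(6*(r/Nr))/(4*Nr^2))‖ * ‖d‖) ≤ ‖M‖ * ((3/(2*Nr^2)) * ‖d‖) := by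
      apply mul_le_mul_of_nonneg_left _ hMn
      exact mul_le_mul_of_nonneg_right h3 hdn
    refine le_trans step ?_
    rw [div_le_iff₀ (by positivity : (0:ℝ) < 2*Cbar)] at hN2
    have hsq : Nr ≤ Nr^2 := by nlinarith
    have key : 3 * ‖M‖ * ‖d‖ ≤ 2 * Cbar * Nr^2 := by nlinarith
    have heq : ‖M‖ * ((3/(2*Nr^2)) * ‖d‖) = (3*‖M‖*‖d‖)/(2*Nr^2) := by ring
    rw [heq, div_le_iff₀ (by positivity : (0:ℝ) < 2*Nr^2)]
    nlinarith

lemma main_bound {X : Type*} [NormedAddCommGroup X] [NormedSpace ℝ X]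
    [FiniteDimensional ℝ X]
    (M : X →L[ℝ] X →L[ℝ] ℝ)
    (hMsym : ∀ x y, M x y = M y x)
    (hMpos : ∀ x : X, x ≠ 0 → 0 < M x x)
    (Cbar : ℝ)
    (T : ℝ)
    (E : ℝ → X → ℝ) (DE : ℝ → X → (X →L[ℝ] ℝ))
    (hEdiff : ∀ t ∈ Set.Icc 0 T, ∀ x : X, HasFDerivAt (E t) (DE t x) x)
    (hDEcont : ContinuousOn (fun q : ℝ × X => DE q.1 q.2) (Set.Icc 0 T ×ˢ Set.univ))
    (p : X → (X →L[ℝ] ℝ) → ℝ)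
    (hp_cont : Continuous (fun q : X × (X →L[ℝ] ℝ) => p q.1 q.2))
    (hp_low : ∀ (x : X) (w : X →L[ℝ] ℝ), w x ≤ p x w)
    (L : ℝ) (hL : 0 ≤ L)
    (hp_lip : ∀ (x : X) (w₁ w₂ : X →L[ℝ] ℝ), |p x w₁ - p x w₂| ≤ L * ‖x‖ * ‖w₁ - w₂‖)
    (t : ℝ) (ht : t ∈ Set.Icc 0 T) (u₁ u₂ : X)
    (N : ℕ) (A : AdmCurve M Cbar N u₁ u₂) :
    E t u₁ - E t u₂ ≤
      ∫ r in (-(N : ℝ))..(N : ℝ), p (A.dv r) (-(M (A.ddv r)) - DE t (A.v r)) := by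
  have hcomp : CompleteSpace X := FiniteDimensional.complete ℝ X
  set a : ℝ := -(N : ℝ) with ha
  set b : ℝ := (N : ℝ) with hb
  have hab : a ≤ b := by
    rw [ha, hb]; exact neg_le_self (Nat.cast_nonneg N)
  have haI : a ∈ Set.Icc a b := ⟨le_rfl, hab⟩
  have hbI : b ∈ Set.Icc a b := ⟨hab, le_rfl⟩
  haveI hfinIcc : IsFiniteMeasure (volume.restrict (Set.Icc a b)) := by
    constructor; rw [Measure.restrict_apply_univ]; exact measure_Icc_lt_top
  haveI hfinIoc : IsFiniteMeasure (volume.restrict (Set.Ioc a b)) := by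
    constructor; rw [Measure.restrict_apply_univ]; exact measure_Ioc_lt_top
  -- M is antilipschitz
  obtain ⟨K, hK0, hKa⟩ : ∃ K > 0, AntilipschitzWith K (M : X →ₗ[ℝ] (X →L[ℝ] ℝ)) := by
    apply LinearMap.exists_antilipschitzWith
    rw [LinearMap.ker_eq_bot']
    intro x hx
    by_contra hne
    have h1 : M x x = 0 := by
      have : M x = 0 := hx
      rw [this]; rfl
    exact absurd h1 (ne_of_gt (hMpos x hne))
  have hKnorm : ∀ x : X, ‖x‖ ≤ (K : ℝ) * ‖M x‖ := by
    intro x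
    have := hKa.le_mul_dist x 0
    simpa [dist_eq_norm] using this
  -- ddv bounded a.e.
  have hbd : ∀ᵐ r ∂volume, r ∈ Set.Icc a b → ‖A.ddv r‖ ≤ (K : ℝ) * Cbar := by
    filter_upwards [A.h_bound] with r hr hrI
    exact le_trans (hKnorm _) (mul_le_mul_of_nonneg_left (hr hrI) (le_of_lt (by exact_mod_cast hK0)))
  have hbd' : ∀ᵐ r ∂(volume.restrict (Set.Icc a b)), ‖A.ddv r‖ ≤ (K : ℝ) * Cbar :=
    (ae_restrict_iff' measurableSet_Icc).2 hbd
  have hbd'' : ∀ᵐ r ∂(volume.restrict (Set.Ioc a b)), ‖A.ddv r‖ ≤ (K : ℝ) * Cbar :=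
    ae_mono (Measure.restrict_mono Set.Ioc_subset_Icc_self le_rfl) hbd'
  -- integrability of ddv
  have hddv_int : IntegrableOn A.ddv (Set.Icc a b) :=
    Integrable.mono' (integrable_const ((K : ℝ) * Cbar)) A.h_meas.restrict hbd'
  have hddv_ii : IntervalIntegrable A.ddv volume a b := by
    rw [intervalIntegrable_iff_integrableOn_Ioc_of_le hab]
    exact hddv_int.mono_set Set.Ioc_subset_Icc_self
  -- the primitive of ddv
  set φ : ℝ → X := fun r => ∫ s in Set.Ioc a r, A.ddv s with hφ
  have hφcont : ContinuousOn φ (Set.Icc a b) :=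
    intervalIntegral.continuousOn_primitive hddv_int
  have hdv_eq : ∀ r ∈ Set.Icc a b, A.dv r = A.dv a + φ r := by
    intro r hr
    rw [A.h_int2 r hr, hφ]
    rw [intervalIntegral.integral_of_le hr.1]
  have hdvcont : ContinuousOn A.dv (Set.Icc a b) := by
    apply ContinuousOn.congr (continuousOn_const.add hφcont)
    intro r hr; exact hdv_eq r hr
  -- continuous extension of dv and its primitive
  set w : ℝ → X := Set.IccExtend hab ((Set.Icc a b).restrict A.dv) with hw
  have hwcont : Continuous w := hdvcont.restrict.Icc_extend'
  have hweq : ∀ r ∈ Set.Icc a b, w r = A.dv r := by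
    intro r hr; rw [hw, Set.IccExtend_of_mem hab _ hr]; rfl
  set V : ℝ → X := fun r => u₁ + ∫ s in a..r, w s with hV
  have hVder : ∀ r : ℝ, HasDerivAt V (w r) r := by
    intro r
    exact ((hwcont.integral_hasStrictDerivAt a r).hasDerivAt).const_add u₁
  have hVcont : Continuous V := by
    rw [continuous_iff_continuousAt]; exact fun r => (hVder r).continuousAt
  have hVeq : ∀ r ∈ Set.Icc a b, V r = A.v r := by
    intro r hr
    rw [A.h_int1 r hr]
    show u₁ + (∫ s in a..r, w s) = u₁ + ∫ s in (-(N:ℝ))..r, A.dv s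
    congr 1
    apply intervalIntegral.integral_congr
    intro s hs
    have hs' : s ∈ Set.Icc a b := by
      rw [Set.uIcc_of_le hr.1] at hs
      exact ⟨hs.1, le_trans hs.2 hr.2⟩
    exact hweq s hs'
  have hVa : V a = u₁ := by rw [hVeq a haI, ha]; exact A.h_start
  have hVb : V b = u₂ := by rw [hVeq b hbI, hb]; exact A.h_end
  -- continuity of DE along V
  have hDEV : Continuous (fun r => DE t (V r)) := by
    have : Continuous (fun r => ((t, V r) : ℝ × X)) := continuous_const.prodMk hVcont
    exact hDEcont.comp_continuous this (fun r => ⟨ht, Set.mem_univ _⟩)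
  have hgd_cont : Continuous (fun r => DE t (V r) (w r)) := hDEV.clm_apply hwcont
  -- FTC for the energy
  have hftc : (∫ r in a..b, DE t (V r) (w r)) = E t u₂ - E t u₁ := by
    have hder : ∀ r ∈ Set.uIcc a b, HasDerivAt (fun r => E t (V r)) (DE t (V r) (w r)) r := by
      intro r _
      exact (hEdiff t ht (V r)).comp_hasDerivAt r (hVder r)
    rw [intervalIntegral.integral_eq_sub_of_hasDerivAt hder (hgd_cont.intervalIntegrable a b)]
    rw [hVa, hVb]
  have hDE_congr : (∫ r in a..b, DE t (A.v r) (A.dv r)) = ∫ r in a..b, DE t (V r) (w r) := by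
    apply intervalIntegral.integral_congr
    intro r hr
    rw [Set.uIcc_of_le hab] at hr
    show (DE t (A.v r)) (A.dv r) = (DE t (V r)) (w r)
    rw [hVeq r hr, hweq r hr]
  -- the inertial term vanishes
  have hI_eq : φ b = A.dv b - A.dv a := by
    have h := A.h_int2 b hbI
    rw [intervalIntegral.integral_of_le hab] at h
    rw [hφ]
    rw [h]; abel
  have hMI : M (φ b) = 0 := by
    rw [hI_eq, map_sub]
    have h1 : M (A.dv b) = 0 := by rw [hb]; exact A.h_vel_end
    have h2 : M (A.dv a) = 0 := by rw [ha]; exact A.h_vel_start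
    rw [h1, h2, sub_zero]
  have hMa : M (A.dv a) = 0 := by rw [ha]; exact A.h_vel_start
  have hddv_mIoc : AEStronglyMeasurable A.ddv (volume.restrict (Set.Ioc a b)) :=
    A.h_meas.restrict
  have hJ2 : (∫ r in Set.Ioc a b, M (A.ddv r) (φ r)) = 0 := by
    have h := sym_fubini M hMsym A.ddv hddv_mIoc hbd''
    have h2 : M (∫ r in Set.Ioc a b, A.ddv r) (∫ r in Set.Ioc a b, A.ddv r) = 0 := by
      have : (∫ r in Set.Ioc a b, A.ddv r) = φ b := rfl
      rw [this, hMI]; rfl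
    rw [h2] at h
    linarith
  have hddv_intIoc : IntegrableOn A.ddv (Set.Ioc a b) :=
    hddv_int.mono_set Set.Ioc_subset_Icc_self
  have hJ1 : (∫ r in Set.Ioc a b, M (A.ddv r) (A.dv a)) = 0 := by
    have h1 : ∀ r : ℝ, M (A.ddv r) (A.dv a) = (M.flip (A.dv a)) (A.ddv r) := fun r => rfl
    simp only [h1]
    rw [(M.flip (A.dv a)).integral_comp_comm hddv_intIoc]
    have : M.flip (A.dv a) (∫ r in Set.Ioc a b, A.ddv r) = M (φ b) (A.dv a) := rfl
    rw [this, hMI]; rfl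
  -- integrability of the middle terms
  obtain ⟨C1, hC1⟩ := isCompact_Icc.exists_bound_of_continuousOn hdvcont
  have hvcont : ContinuousOn A.v (Set.Icc a b) := by
    apply ContinuousOn.congr hVcont.continuousOn
    intro r hr; exact (hVeq r hr).symm
  have hDEvcont : ContinuousOn (fun r => DE t (A.v r)) (Set.Icc a b) := by
    apply ContinuousOn.congr hDEV.continuousOn
    intro r hr; show DE t (A.v r) = DE t (V r); rw [hVeq r hr]
  obtain ⟨C2, hC2⟩ := isCompact_Icc.exists_bound_of_continuousOn hDEvcont
  have hφIoc : ContinuousOn φ (Set.Ioc a b) := hφcont.mono Set.Ioc_subset_Icc_self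
  obtain ⟨C3, hC3⟩ := isCompact_Icc.exists_bound_of_continuousOn hφcont
  -- J vanishes
  have hφmeas : AEStronglyMeasurable φ (volume.restrict (Set.Ioc a b)) :=
    (hφcont.mono Set.Ioc_subset_Icc_self).aestronglyMeasurable measurableSet_Ioc
  have hf2meas : AEStronglyMeasurable (fun r => M (A.ddv r) (φ r))
      (volume.restrict (Set.Ioc a b)) := by
    apply M.continuous₂.comp_aestronglyMeasurable (hddv_mIoc.prodMk hφmeas)
  have hf2int : IntegrableOn (fun r => M (A.ddv r) (φ r)) (Set.Ioc a b) := by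
    refine Integrable.mono' (integrable_const (‖M‖ * ((K:ℝ)*Cbar) * |C3|)) hf2meas ?_
    have hφb : ∀ᵐ r ∂(volume.restrict (Set.Ioc a b)), ‖φ r‖ ≤ |C3| := by
      rw [ae_restrict_iff' measurableSet_Ioc]
      apply ae_of_all
      intro r hr
      exact le_trans (hC3 r (Set.Ioc_subset_Icc_self hr)) (le_abs_self C3)
    filter_upwards [hbd'', hφb] with r h1 h2
    have hKC : (0:ℝ) ≤ (K:ℝ)*Cbar := le_trans (norm_nonneg _) h1
    calc ‖M (A.ddv r) (φ r)‖ ≤ ‖M (A.ddv r)‖ * ‖φ r‖ := (M (A.ddv r)).le_opNorm _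
      _ ≤ (‖M‖ * ‖A.ddv r‖) * ‖φ r‖ :=
        mul_le_mul_of_nonneg_right (M.le_opNorm _) (norm_nonneg _)
      _ ≤ ‖M‖ * ((K:ℝ)*Cbar) * |C3| := by
        apply mul_le_mul _ h2 (norm_nonneg _) (by positivity)
        exact mul_le_mul_of_nonneg_left h1 (norm_nonneg M)
  have hf1int : IntegrableOn (fun r => M (A.ddv r) (A.dv a)) (Set.Ioc a b) := by
    have : (fun r => M (A.ddv r) (A.dv a)) = fun r => (M.flip (A.dv a)) (A.ddv r) := rfl
    rw [this]
    exact (M.flip (A.dv a)).integrable_comp hddv_intIoc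
  have hJ : (∫ r in a..b, M (A.ddv r) (A.dv r)) = 0 := by
    rw [intervalIntegral.integral_of_le hab]
    have hcongr : (∫ r in Set.Ioc a b, M (A.ddv r) (A.dv r))
        = ∫ r in Set.Ioc a b, (M (A.ddv r) (A.dv a) + M (A.ddv r) (φ r)) := by
      apply setIntegral_congr_fun measurableSet_Ioc
      intro r hr
      show M (A.ddv r) (A.dv r) = M (A.ddv r) (A.dv a) + M (A.ddv r) (φ r)
      rw [hdv_eq r (Set.Ioc_subset_Icc_self hr)]
      simp [map_add]
    rw [hcongr, integral_add hf1int hf2int, hJ1, hJ2, add_zero]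
  -- pointwise lower bound and integrability
  set W : ℝ → (X →L[ℝ] ℝ) := fun r => -(M (A.ddv r)) - DE t (A.v r) with hWdef
  have hlow : ∀ r ∈ Set.Icc a b, W r (A.dv r) ≤ p (A.dv r) (W r) := fun r _ => hp_low _ _
  -- measurability of W
  have hdv_meas : AEStronglyMeasurable A.dv (volume.restrict (Set.Icc a b)) :=
    hdvcont.aestronglyMeasurable measurableSet_Icc
  have hMddv_meas : AEStronglyMeasurable (fun r => M (A.ddv r))
      (volume.restrict (Set.Icc a b)) :=
    M.continuous.comp_aestronglyMeasurable A.h_meas.restrict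
  have hDEv_meas : AEStronglyMeasurable (fun r => DE t (A.v r))
      (volume.restrict (Set.Icc a b)) :=
    hDEvcont.aestronglyMeasurable measurableSet_Icc
  have hW_meas : AEStronglyMeasurable W (volume.restrict (Set.Icc a b)) :=
    (hMddv_meas.neg).sub hDEv_meas
  have hWbd : ∀ᵐ r ∂(volume.restrict (Set.Icc a b)), ‖W r‖ ≤ Cbar + |C2| := by
    have h1 : ∀ᵐ r ∂(volume.restrict (Set.Icc a b)), r ∈ Set.Icc a b :=
      (ae_restrict_iff' measurableSet_Icc).2 (ae_of_all _ (fun r hr => hr))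
    filter_upwards [(ae_restrict_iff' measurableSet_Icc).2 A.h_bound, h1] with r h2 h3
    calc ‖W r‖ ≤ ‖-(M (A.ddv r))‖ + ‖DE t (A.v r)‖ := norm_sub_le _ _
      _ ≤ Cbar + |C2| := by
        rw [norm_neg]
        exact add_le_add h2 (le_trans (hC2 r h3) (le_abs_self C2))
  -- integrability of the lower function
  have hdvbd : ∀ᵐ r ∂(volume.restrict (Set.Icc a b)), ‖A.dv r‖ ≤ |C1| := by
    rw [ae_restrict_iff' measurableSet_Icc]
    apply ae_of_all
    intro r hr
    exact le_trans (hC1 r hr) (le_abs_self C1)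
  have heval_cont : Continuous (fun q : (X →L[ℝ] ℝ) × X => q.1 q.2) :=
    isBoundedBilinearMap_apply.continuous
  have hlow_int : IntegrableOn (fun r => W r (A.dv r)) (Set.Icc a b) := by
    refine Integrable.mono' (integrable_const ((Cbar + |C2|) * |C1|)) ?_ ?_
    · exact heval_cont.comp_aestronglyMeasurable (hW_meas.prodMk hdv_meas)
    · filter_upwards [hWbd, hdvbd] with r h1 h2
      calc ‖W r (A.dv r)‖ ≤ ‖W r‖ * ‖A.dv r‖ := (W r).le_opNorm _
        _ ≤ (Cbar + |C2|) * |C1| :=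
          mul_le_mul h1 h2 (norm_nonneg _) (le_trans (norm_nonneg _) h1)
  -- bound on p (dv r) 0
  have hp0cont : ContinuousOn (fun r => p (A.dv r) 0) (Set.Icc a b) := by
    have hc : Continuous (fun x : X => p x 0) :=
      hp_cont.comp (continuous_id.prodMk continuous_const)
    exact hc.comp_continuousOn hdvcont
  obtain ⟨C4, hC4⟩ := isCompact_Icc.exists_bound_of_continuousOn hp0cont
  have hup_int : IntegrableOn (fun r => p (A.dv r) (W r)) (Set.Icc a b) := by
    refine Integrable.mono' (integrable_const (|C4| + L * |C1| * (Cbar + |C2|))) ?_ ?_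
    · exact hp_cont.comp_aestronglyMeasurable (hdv_meas.prodMk hW_meas)
    · have hmem : ∀ᵐ r ∂(volume.restrict (Set.Icc a b)), r ∈ Set.Icc a b :=
        (ae_restrict_iff' measurableSet_Icc).2 (ae_of_all _ (fun r hr => hr))
      filter_upwards [hWbd, hdvbd, hmem] with r h1 h2 h3
      have hWn : (0:ℝ) ≤ Cbar + |C2| := le_trans (norm_nonneg _) h1
      have key : |p (A.dv r) (W r) - p (A.dv r) 0| ≤ L * ‖A.dv r‖ * ‖W r‖ := by
        have h := hp_lip (A.dv r) (W r) 0
        simpa using h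
      have h4 : ‖p (A.dv r) (W r)‖ ≤ |p (A.dv r) 0| + L * ‖A.dv r‖ * ‖W r‖ := by
        rw [Real.norm_eq_abs]
        have : p (A.dv r) (W r) = p (A.dv r) 0 + (p (A.dv r) (W r) - p (A.dv r) 0) := by ring
        rw [this]
        exact le_trans (abs_add_le _ _) (add_le_add_right key _)
      refine le_trans h4 (add_le_add ?_ ?_)
      · have := hC4 r h3
        rw [Real.norm_eq_abs] at this
        exact le_trans this (le_abs_self C4)
      · have hL1 : L * ‖A.dv r‖ ≤ L * |C1| := mul_le_mul_of_nonneg_left h2 hL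
        calc L * ‖A.dv r‖ * ‖W r‖ ≤ (L * |C1|) * (Cbar + |C2|) :=
              mul_le_mul hL1 h1 (norm_nonneg _) (by positivity)
          _ = L * |C1| * (Cbar + |C2|) := by ring
  -- interval integrability
  have hlow_ii : IntervalIntegrable (fun r => W r (A.dv r)) volume a b := by
    apply IntegrableOn.intervalIntegrable
    rw [Set.uIcc_of_le hab]
    exact hlow_int
  have hup_ii : IntervalIntegrable (fun r => p (A.dv r) (W r)) volume a b := by
    apply IntegrableOn.intervalIntegrable
    rw [Set.uIcc_of_le hab]
    exact hup_int
  have hmono := intervalIntegral.integral_mono_on hab hlow_ii hup_ii hlow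
  -- compute the lower integral
  have hJii : IntervalIntegrable (fun r => M (A.ddv r) (A.dv r)) volume a b := by
    apply IntegrableOn.intervalIntegrable
    rw [Set.uIcc_of_le hab]
    refine Integrable.mono' (integrable_const (Cbar * |C1|)) ?_ ?_
    · exact M.continuous₂.comp_aestronglyMeasurable (A.h_meas.restrict.prodMk hdv_meas)
    · have hmem : ∀ᵐ r ∂(volume.restrict (Set.Icc a b)), r ∈ Set.Icc a b :=
        (ae_restrict_iff' measurableSet_Icc).2 (ae_of_all _ (fun r hr => hr))
      filter_upwards [(ae_restrict_iff' measurableSet_Icc).2 A.h_bound, hdvbd, hmem]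
        with r h1 h2 h3
      calc ‖M (A.ddv r) (A.dv r)‖ ≤ ‖M (A.ddv r)‖ * ‖A.dv r‖ := (M (A.ddv r)).le_opNorm _
        _ ≤ Cbar * |C1| :=
          mul_le_mul h1 h2 (norm_nonneg _) (le_trans (norm_nonneg _) h1)
  have hDEii : IntervalIntegrable (fun r => DE t (A.v r) (A.dv r)) volume a b := by
    apply ContinuousOn.intervalIntegrable
    rw [Set.uIcc_of_le hab]
    exact hDEvcont.clm_apply hdvcont
  have hWint_eq : (∫ r in a..b, W r (A.dv r)) = E t u₁ - E t u₂ := by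
    have h2 := intervalIntegral.integral_sub hJii.neg hDEii
    have h3 : (∫ r in a..b, W r (A.dv r))
        = ∫ r in a..b, (-(M (A.ddv r) (A.dv r)) - DE t (A.v r) (A.dv r)) := by
      apply intervalIntegral.integral_congr
      intro r _
      show W r (A.dv r) = -(M (A.ddv r) (A.dv r)) - DE t (A.v r) (A.dv r)
      simp [hWdef]
    have h4 : (∫ r in a..b, W r (A.dv r))
        = (∫ r in a..b, -(M (A.ddv r) (A.dv r))) - ∫ r in a..b, DE t (A.v r) (A.dv r) := by
      rw [h3]; exact h2
    rw [h4, intervalIntegral.integral_neg, hJ, neg_zero, zero_sub, hDE_congr, hftc]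
    ring
  calc E t u₁ - E t u₂ = ∫ r in a..b, W r (A.dv r) := hWint_eq.symm
    _ ≤ ∫ r in a..b, p (A.dv r) (W r) := hmono

/-- Proposition 3.8: energy gap upper bound by the inertial
cost.  For every regularized contact potential `p` (in particular
`p(v,w) ≥ ⟨w,v⟩`), every `t ∈ [0,T]` and `u₁, u₂ ∈ X`:
`E(t,u₁) − E(t,u₂) ≤ c_t^{M,p}(u₁,u₂)`; consequently the energy gap is also
bounded by the infimum over all regularized contact potentials. -/
theorem energy_gap_le_inertialCost {X : Type*} [NormedAddCommGroup X] [NormedSpace ℝ X]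
    [FiniteDimensional ℝ X]
    (M : X →L[ℝ] X →L[ℝ] ℝ)
    (hMsym : ∀ x y, M x y = M y x)
    (hMpos : ∀ x : X, x ≠ 0 → 0 < M x x)
    (Cbar : ℝ) (hCbar : 0 < Cbar)
    (T : ℝ) (hT : 0 < T)
    (R : X → ℝ)
    (hRnonneg : ∀ x, 0 ≤ R x)
    (hRcoer : ∃ α > 0, ∀ x, α * ‖x‖ ≤ R x)
    (hRconv : ConvexOn ℝ Set.univ R)
    (hRhom : ∀ c : ℝ, 0 ≤ c → ∀ x, R (c • x) = c * R x)
    (E : ℝ → X → ℝ) (DE : ℝ → X → (X →L[ℝ] ℝ))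
    (hEdiff : ∀ t ∈ Set.Icc 0 T, ∀ x : X, HasFDerivAt (E t) (DE t x) x)
    (hDEcont : ContinuousOn (fun q : ℝ × X => DE q.1 q.2) (Set.Icc 0 T ×ˢ Set.univ))
    (p : X → (X →L[ℝ] ℝ) → ℝ)
    (hp_cont : Continuous (fun q : X × (X →L[ℝ] ℝ) => p q.1 q.2))
    (hp_hom : ∀ c : ℝ, 0 ≤ c → ∀ (x : X) (w : X →L[ℝ] ℝ), p (c • x) w = c * p x w)
    (hp_low : ∀ (x : X) (w : X →L[ℝ] ℝ), max (R x) (w x) ≤ p x w)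
    (L : ℝ) (hL : 0 ≤ L)
    (hp_lip : ∀ (x : X) (w₁ w₂ : X →L[ℝ] ℝ), |p x w₁ - p x w₂| ≤ L * ‖x‖ * ‖w₁ - w₂‖)
    (t : ℝ) (ht : t ∈ Set.Icc 0 T) (u₁ u₂ : X) :
    E t u₁ - E t u₂ ≤ inertialCost M Cbar p DE t u₁ u₂ := by
  obtain ⟨N₀, ⟨A₀⟩⟩ := exists_admCurve M Cbar hCbar u₁ u₂
  apply le_csInf
  · exact ⟨_, N₀, A₀, rfl⟩
  · rintro s ⟨N, A, rfl⟩
    exact main_bound M hMsym hMpos Cbar T E DE hEdiff hDEcont p hp_cont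
      (fun x w => le_trans (le_max_right _ _) (hp_low x w)) L hL hp_lip t ht u₁ u₂ N A
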